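/- Let H be a cyclic subgroup of (ZMod ℓ^m)⁴ generated by an element of additive order exactly ℓ^m. Then the number of isotropic submodules of (ZMod ℓ^m)⁴ that are isomorphic as ZMod ℓ^m-modules to (ZMod ℓ^m)² and contain H is exactly ℓ^m + ℓ^{m−1}. -/

import Mathlib

namespace Stmt4
variable {n : ℕ}

def ω (a b : Fin 4 → ZMod n) : ZMod n :=
  a 0 * b 1 - a 1 * b 0 + a 2 * b 3 - a 3 * b 2

def e0 : Fin 4 → ZMod n := ![1,0,0,0]

def sLin : (Fin 4 → ZMod n) ≃ₗ[ZMod n] (Fin 4 → ZMod n) where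
  toFun a := ![a 1, -a 0, a 2, a 3]
  invFun a := ![-(a 1), a 0, a 2, a 3]
  map_add' a b := by funext i; fin_cases i <;> simp <;> ring
  map_smul' c a := by funext i; fin_cases i <;> simp <;> ring
  left_inv a := by funext i; fin_cases i <;> simp
  right_inv a := by funext i; fin_cases i <;> simp

lemma sLin_ω (a b : Fin 4 → ZMod n) : ω (sLin a) (sLin b) = ω a b := by
  simp [sLin, ω]; ring

def tLin : (Fin 4 → ZMod n) ≃ₗ[ZMod n] (Fin 4 → ZMod n) where
  toFun a := ![a 2, a 3, a 0, a 1]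
  invFun a := ![a 2, a 3, a 0, a 1]
  map_add' a b := by funext i; fin_cases i <;> simp
  map_smul' c a := by funext i; fin_cases i <;> simp
  left_inv a := by funext i; fin_cases i <;> simp
  right_inv a := by funext i; fin_cases i <;> simp

lemma tLin_ω (a b : Fin 4 → ZMod n) : ω (tLin a) (tLin b) = ω a b := by
  simp [tLin, ω]; ring

def g0 (x : Fin 4 → ZMod n) (u : (ZMod n)ˣ) (hu : (u : ZMod n) = x 0) :
    (Fin 4 → ZMod n) ≃ₗ[ZMod n] (Fin 4 → ZMod n) where
  toFun a := ![a 0 * x 0,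
               a 0 * x 1 + (↑u⁻¹ : ZMod n) * (a 1 + a 2 * x 3 - a 3 * x 2),
               a 0 * x 2 + a 2,
               a 0 * x 3 + a 3]
  invFun b := ![(↑u⁻¹ : ZMod n) * b 0,
                (↑u : ZMod n) * (b 1 - (↑u⁻¹ : ZMod n) * b 0 * x 1)
                  - (b 2 - (↑u⁻¹ : ZMod n) * b 0 * x 2) * x 3
                  + (b 3 - (↑u⁻¹ : ZMod n) * b 0 * x 3) * x 2,
                b 2 - (↑u⁻¹ : ZMod n) * b 0 * x 2,
                b 3 - (↑u⁻¹ : ZMod n) * b 0 * x 3]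
  map_add' a b := by funext i; fin_cases i <;> simp <;> ring
  map_smul' c a := by funext i; fin_cases i <;> simp <;> ring
  left_inv a := by
    have key : (↑u : ZMod n) * ↑u⁻¹ = 1 := u.mul_inv
    funext i
    fin_cases i <;> simp <;> rw [← hu]
    · linear_combination a 0 * key
    · linear_combination (a 1 + a 2 * x 3 - a 3 * x 2 - a 0 * x 1 * (↑u : ZMod n)) * key
    · linear_combination (-(a 0 * x 2)) * key
    · linear_combination (-(a 0 * x 3)) * key
  right_inv b := by
    have key : (↑u : ZMod n) * ↑u⁻¹ = 1 := u.mul_inv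
    funext i
    fin_cases i <;> simp
    · rw [← hu]; linear_combination b 0 * key
    · linear_combination (b 1 - (↑u⁻¹ : ZMod n) * b 0 * x 1) * key

lemma g0_ω (x : Fin 4 → ZMod n) (u : (ZMod n)ˣ) (hu : (u : ZMod n) = x 0) (a b : Fin 4 → ZMod n) :
    ω (g0 x u hu a) (g0 x u hu b) = ω a b := by
  have key : (↑u : ZMod n) * ↑u⁻¹ = 1 := u.mul_inv
  show _ - _ + _ - _ = _
  simp only [g0, ω, LinearEquiv.coe_mk, Matrix.cons_val_zero, Matrix.cons_val_one,
    Matrix.head_cons, Matrix.cons_val_two, Matrix.cons_val_three, Matrix.vecHead, Matrix.vecTail]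
  simp
  rw [← hu]
  linear_combination (a 0 * b 1 - a 1 * b 0 + x 3 * (a 0 * b 2 - a 2 * b 0)
    - x 2 * (a 0 * b 3 - a 3 * b 0)) * key

lemma g0_e0 (x : Fin 4 → ZMod n) (u : (ZMod n)ˣ) (hu : (u : ZMod n) = x 0) :
    g0 x u hu e0 = x := by
  funext i
  fin_cases i <;> simp [g0, e0]


lemma symm_ω (g : (Fin 4 → ZMod n) ≃ₗ[ZMod n] (Fin 4 → ZMod n))
    (hg : ∀ a b, ω (g a) (g b) = ω a b) (a b : Fin 4 → ZMod n) :
    ω (g.symm a) (g.symm b) = ω a b := by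
  conv_rhs => rw [← g.apply_symm_apply a, ← g.apply_symm_apply b]
  rw [hg]

lemma exists_g (x : Fin 4 → ZMod n) (hx : ∃ i, IsUnit (x i)) :
    ∃ g : (Fin 4 → ZMod n) ≃ₗ[ZMod n] (Fin 4 → ZMod n),
      (∀ a b, ω (g a) (g b) = ω a b) ∧ g e0 = x := by
  have helper : ∀ (P : (Fin 4 → ZMod n) ≃ₗ[ZMod n] (Fin 4 → ZMod n)),
      (∀ a b, ω (P a) (P b) = ω a b) →
      ∀ y : Fin 4 → ZMod n,
      (∃ g : (Fin 4 → ZMod n) ≃ₗ[ZMod n] (Fin 4 → ZMod n),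
        (∀ a b, ω (g a) (g b) = ω a b) ∧ g e0 = P y) →
      (∃ g : (Fin 4 → ZMod n) ≃ₗ[ZMod n] (Fin 4 → ZMod n),
        (∀ a b, ω (g a) (g b) = ω a b) ∧ g e0 = y) := by
    rintro P hP y ⟨g, hg, hge⟩
    refine ⟨g.trans P.symm, fun a b => ?_, ?_⟩
    · simp only [LinearEquiv.trans_apply]
      rw [symm_ω P hP, hg]
    · simp [LinearEquiv.trans_apply, hge]
  have case0 : ∀ y : Fin 4 → ZMod n, IsUnit (y 0) →
      (∃ g : (Fin 4 → ZMod n) ≃ₗ[ZMod n] (Fin 4 → ZMod n),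
        (∀ a b, ω (g a) (g b) = ω a b) ∧ g e0 = y) := by
    rintro y ⟨u, hu⟩
    exact ⟨g0 y u hu, g0_ω y u hu, g0_e0 y u hu⟩
  have case1 : ∀ y : Fin 4 → ZMod n, IsUnit (y 1) →
      (∃ g : (Fin 4 → ZMod n) ≃ₗ[ZMod n] (Fin 4 → ZMod n),
        (∀ a b, ω (g a) (g b) = ω a b) ∧ g e0 = y) := by
    intro y hy
    refine helper sLin sLin_ω y (case0 _ ?_)
    simpa [sLin] using hy
  obtain ⟨i, hi⟩ := hx
  fin_cases i
  · exact case0 x hi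
  · exact case1 x hi
  · refine helper tLin tLin_ω x (case0 _ ?_)
    simpa [tLin] using hi
  · refine helper tLin tLin_ω x (case1 _ ?_)
    simpa [tLin] using hi

variable {ℓ m : ℕ}

lemma nezero (hℓ : ℓ.Prime) (hm : 1 ≤ m) : NeZero (ℓ ^ m) :=
  ⟨pow_ne_zero m hℓ.ne_zero⟩

lemma nonunit_iff (hℓ : ℓ.Prime) (hm : 1 ≤ m) (a : ZMod (ℓ ^ m)) :
    ¬ IsUnit a ↔ ∃ b, a = (ℓ : ZMod (ℓ ^ m)) * b := by
  haveI := nezero hℓ hm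
  constructor
  · intro h
    have hv : ((a.val : ℕ) : ZMod (ℓ ^ m)) = a := ZMod.natCast_rightInverse a
    have hcop : ¬ a.val.Coprime (ℓ ^ m) := by
      intro hc
      exact h (hv ▸ (ZMod.isUnit_iff_coprime a.val (ℓ ^ m)).mpr hc)
    have hdvd : ℓ ∣ a.val := by
      by_contra hd
      exact hcop (Nat.Coprime.pow_right m ((hℓ.coprime_iff_not_dvd).mpr hd).symm)
    obtain ⟨b, hb⟩ := hdvd
    exact ⟨(b : ZMod (ℓ ^ m)), by rw [← hv, hb]; push_cast; ring⟩
  · rintro ⟨b, rfl⟩ hu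
    have hℓu : IsUnit ((ℓ : ZMod (ℓ ^ m))) := isUnit_of_mul_isUnit_left hu
    have h0 : IsUnit ((ℓ : ZMod (ℓ ^ m)) ^ m) := hℓu.pow m
    rw [show ((ℓ : ZMod (ℓ ^ m)) ^ m) = ((ℓ ^ m : ℕ) : ZMod (ℓ ^ m)) by push_cast; ring,
      ZMod.natCast_self] at h0
    haveI : Fact (1 < ℓ ^ m) := ⟨Nat.one_lt_pow (by omega) hℓ.one_lt⟩
    exact zero_ne_one (isUnit_zero_iff.mp h0)

lemma pow_pred_ne_zero (hℓ : ℓ.Prime) (hm : 1 ≤ m) :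
    ((ℓ ^ (m - 1) : ℕ) : ZMod (ℓ ^ m)) ≠ 0 := by
  haveI := nezero hℓ hm
  rw [Ne, ZMod.natCast_eq_zero_iff]
  intro h
  have := (Nat.pow_dvd_pow_iff_le_right hℓ.one_lt).mp h
  omega

lemma kill (hℓ : ℓ.Prime) (hm : 1 ≤ m) (b : ZMod (ℓ ^ m)) :
    ((ℓ ^ (m - 1) : ℕ) : ZMod (ℓ ^ m)) * ((ℓ : ZMod (ℓ ^ m)) * b) = 0 := by
  have h : ((ℓ ^ (m - 1) : ℕ) : ZMod (ℓ ^ m)) * (ℓ : ZMod (ℓ ^ m)) = 0 := by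
    rw [show ((ℓ ^ (m - 1) : ℕ) : ZMod (ℓ ^ m)) * (ℓ : ZMod (ℓ ^ m))
        = ((ℓ ^ (m - 1) * ℓ : ℕ) : ZMod (ℓ ^ m)) by push_cast; ring,
      show ℓ ^ (m - 1) * ℓ = ℓ ^ m by rw [← pow_succ]; congr 1; omega, ZMod.natCast_self]
  rw [← mul_assoc, h, zero_mul]

lemma card_nonunits (hℓ : ℓ.Prime) (hm : 1 ≤ m) :
    Nat.card {s : ZMod (ℓ ^ m) // ¬ IsUnit s} = ℓ ^ (m - 1) := by
  haveI := nezero hℓ hm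
  have e : {s : ZMod (ℓ ^ m) // ¬ IsUnit s} ≃ AddSubgroup.zmultiples ((ℓ : ZMod (ℓ ^ m))) := by
    apply Equiv.subtypeEquivRight
    intro s
    rw [nonunit_iff hℓ hm, AddSubgroup.mem_zmultiples_iff]
    constructor
    · rintro ⟨b, rfl⟩
      refine ⟨(b.val : ℤ), ?_⟩
      rw [zsmul_eq_mul]
      push_cast
      rw [ZMod.natCast_rightInverse b]
      ring
    · rintro ⟨k, rfl⟩
      refine ⟨(k : ZMod (ℓ ^ m)), ?_⟩
      rw [zsmul_eq_mul]
      ring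
  rw [Nat.card_congr e, Nat.card_zmultiples, ZMod.addOrderOf_coe ℓ (NeZero.ne _),
    Nat.gcd_eq_right (dvd_pow_self ℓ (by omega)),
    show ℓ ^ m = ℓ ^ (m - 1) * ℓ by rw [← pow_succ]; congr 1; omega,
    Nat.mul_div_cancel _ hℓ.pos]


section Part5
variable {n : ℕ}

def wv (c d : ZMod n) : Fin 4 → ZMod n := ![0, 0, c, d]

def Kcd (c d : ZMod n) : Submodule (ZMod n) (Fin 4 → ZMod n) :=
  Submodule.span (ZMod n) {e0, wv c d}

def Good (x : Fin 4 → ZMod n) (K : Submodule (ZMod n) (Fin 4 → ZMod n)) : Prop :=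
  (∀ a ∈ K, ∀ b ∈ K, ω a b = 0) ∧
  Nonempty (K ≃ₗ[ZMod n] (Fin 2 → ZMod n)) ∧ x ∈ K

lemma span_pair_sub_smul {R M : Type*} [CommRing R] [AddCommGroup M] [Module R M]
    (x y : M) (r : R) :
    Submodule.span R {x, y - r • x} = Submodule.span R {x, y} := by
  apply le_antisymm <;> rw [Submodule.span_le] <;> rintro z hz <;>
    simp only [Set.mem_insert_iff, Set.mem_singleton_iff] at hz <;> rcases hz with rfl | rfl
  · exact Submodule.subset_span (Set.mem_insert _ _)
  · exact SetLike.mem_coe.mpr (Submodule.mem_span_pair.mpr ⟨-r, 1, by module⟩)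
  · exact Submodule.subset_span (Set.mem_insert _ _)
  · exact SetLike.mem_coe.mpr (Submodule.mem_span_pair.mpr ⟨r, 1, by module⟩)

lemma span_pair_unit_smul {R M : Type*} [CommRing R] [AddCommGroup M] [Module R M]
    (x y : M) (u : Rˣ) :
    Submodule.span R {x, (↑u : R) • y} = Submodule.span R {x, y} := by
  apply le_antisymm <;> rw [Submodule.span_le] <;> rintro z hz <;>
    simp only [Set.mem_insert_iff, Set.mem_singleton_iff] at hz <;> rcases hz with rfl | rfl
  · exact Submodule.subset_span (Set.mem_insert _ _)
  · exact SetLike.mem_coe.mpr (Submodule.mem_span_pair.mpr ⟨0, ↑u, by module⟩)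
  · exact Submodule.subset_span (Set.mem_insert _ _)
  · refine SetLike.mem_coe.mpr (Submodule.mem_span_pair.mpr ⟨0, ↑u⁻¹, ?_⟩)
    rw [zero_smul, zero_add, smul_smul, u.inv_mul, one_smul]

lemma comb_eq (a b c d : ZMod n) : a • e0 + b • wv c d = ![a, 0, b * c, b * d] := by
  funext i; fin_cases i <;> simp [e0, wv]

def combLin (c d : ZMod n) : (Fin 2 → ZMod n) →ₗ[ZMod n] (Fin 4 → ZMod n) where
  toFun p := p 0 • e0 + p 1 • wv c d
  map_add' p q := by
    funext i; fin_cases i <;> simp [e0, wv] <;> ring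
  map_smul' r p := by
    funext i; fin_cases i <;> simp [e0, wv] <;> ring

lemma good_Kcd (c d : ZMod n) (h : IsUnit c ∨ IsUnit d) : Good e0 (Kcd c d) := by
  refine ⟨?_, ?_, Submodule.subset_span (Set.mem_insert _ _)⟩
  · intro a ha b hb
    obtain ⟨p, q, rfl⟩ := Submodule.mem_span_pair.mp ha
    obtain ⟨p', q', rfl⟩ := Submodule.mem_span_pair.mp hb
    rw [comb_eq, comb_eq]
    simp [ω]
    ring
  · have hmem : ∀ p : Fin 2 → ZMod n, combLin c d p ∈ Kcd c d := fun p =>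
      Submodule.mem_span_pair.mpr ⟨p 0, p 1, rfl⟩
    set ψ : (Fin 2 → ZMod n) →ₗ[ZMod n] Kcd c d := (combLin c d).codRestrict _ hmem with hψ
    have hinj : Function.Injective ψ := by
      intro p q hpq
      have h1 : combLin c d p = combLin c d q := congrArg Subtype.val hpq
      have h2 : (![p 0, 0, p 1 * c, p 1 * d] : Fin 4 → ZMod n)
          = ![q 0, 0, q 1 * c, q 1 * d] := by
        rw [← comb_eq, ← comb_eq]; exact h1
      have e0' : p 0 = q 0 := by simpa using congrFun h2 0
      have e2 : p 1 * c = q 1 * c := by simpa using congrFun h2 2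
      have e3 : p 1 * d = q 1 * d := by simpa using congrFun h2 3
      have e1 : p 1 = q 1 := by
        rcases h with hc | hd
        · exact hc.mul_left_injective e2
        · exact hd.mul_left_injective e3
      funext i; fin_cases i
      · exact e0'
      · exact e1
    have hsurj : Function.Surjective ψ := by
      rintro ⟨z, hz⟩
      obtain ⟨a, b, hab⟩ := Submodule.mem_span_pair.mp hz
      exact ⟨![a, b], Subtype.ext (by simpa [ψ, combLin] using hab)⟩
    exact ⟨(LinearEquiv.ofBijective ψ ⟨hinj, hsurj⟩).symm⟩

lemma Kcd_eq_imp {c d c' d' : ZMod n} (h : Kcd c d = Kcd c' d') :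
    ∃ b : ZMod n, b * c = c' ∧ b * d = d' := by
  have hm : wv c' d' ∈ Kcd c d := by
    rw [h]; exact Submodule.subset_span (Set.mem_insert_of_mem _ rfl)
  obtain ⟨a, b, hab⟩ := Submodule.mem_span_pair.mp hm
  rw [comb_eq] at hab
  refine ⟨b, ?_, ?_⟩
  · simpa [wv] using congrFun hab 2
  · simpa [wv] using congrFun hab 3

lemma Kcd_unit_smul {c d c' d' : ZMod n} (u : (ZMod n)ˣ)
    (h : wv c' d' = (↑u : ZMod n) • wv c d) : Kcd c' d' = Kcd c d := by
  rw [Kcd, Kcd, h, span_pair_unit_smul]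

end Part5

section Part6
variable {ℓ m : ℕ}

lemma good_structure (hℓ : ℓ.Prime) (hm : 1 ≤ m)
    (K : Submodule (ZMod (ℓ ^ m)) (Fin 4 → ZMod (ℓ ^ m)))
    (h : Good e0 K) :
    ∃ c d : ZMod (ℓ ^ m), (IsUnit c ∨ IsUnit d) ∧ K = Kcd c d := by
  obtain ⟨hiso, ⟨φ⟩, he⟩ := h
  have ha1 : ∀ a ∈ K, a 1 = 0 := by
    intro a ha
    have h0 := hiso a ha e0 he
    simp [ω, e0] at h0
    exact h0
  set b1 : K := φ.symm ![1, 0] with hb1def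
  set b2 : K := φ.symm ![0, 1] with hb2def
  have hφb1 : φ b1 = ![1, 0] := φ.apply_symm_apply _
  have hφb2 : φ b2 = ![0, 1] := φ.apply_symm_apply _
  have hrepr : ∀ k : K, k = (φ k 0) • b1 + (φ k 1) • b2 := by
    intro k
    apply φ.injective
    rw [map_add, map_smul, map_smul, hφb1, hφb2]
    funext i; fin_cases i <;> simp
  have hindep : ∀ c d : ZMod (ℓ ^ m), c • b1 + d • b2 = 0 → c = 0 ∧ d = 0 := by
    intro c d hcd
    have hφ := congrArg φ hcd
    rw [map_add, map_smul, map_smul, hφb1, hφb2, map_zero] at hφ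
    constructor
    · simpa using congrFun hφ 0
    · simpa using congrFun hφ 1
  set α := φ ⟨e0, he⟩ 0 with hα0
  set β := φ ⟨e0, he⟩ 1 with hβ0
  have hαβ : (⟨e0, he⟩ : K) = α • b1 + β • b2 := hrepr _
  have main : ∀ b1 b2 : K, (∀ k : K, ∃ c d : ZMod (ℓ ^ m), k = c • b1 + d • b2) →
      (∀ c d : ZMod (ℓ ^ m), c • b1 + d • b2 = 0 → c = 0 ∧ d = 0) →
      ∀ α β : ZMod (ℓ ^ m), (⟨e0, he⟩ : K) = α • b1 + β • b2 → IsUnit α →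
      ∃ c d : ZMod (ℓ ^ m), (IsUnit c ∨ IsUnit d) ∧ K = Kcd c d := by
    clear hαβ hindep hrepr hφb1 hφb2 hb1def hb2def hα0 hβ0
    rintro b1 b2 hrep hind α β hαβ ⟨u, hu⟩
    have hw : (b2 : Fin 4 → ZMod (ℓ ^ m)) ∈ K := b2.2
    set w : Fin 4 → ZMod (ℓ ^ m) := (b2 : Fin 4 → ZMod (ℓ ^ m)) with hwdef
    have hw1 : w 1 = 0 := ha1 w hw
    have he0M : e0 = α • (b1 : Fin 4 → ZMod (ℓ ^ m)) + β • w := by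
      have := congrArg Subtype.val hαβ
      simpa using this
    have hb1M : (b1 : Fin 4 → ZMod (ℓ ^ m)) = (↑u⁻¹ : ZMod (ℓ ^ m)) • (e0 - β • w) := by
      rw [he0M, add_sub_cancel_right, smul_smul, ← hu, u.inv_mul, one_smul]
    have hspan : K = Submodule.span (ZMod (ℓ ^ m)) {e0, w} := by
      apply le_antisymm
      · intro k hk
        obtain ⟨c, d, hcd⟩ := hrep ⟨k, hk⟩
        have hcdM : k = c • (b1 : Fin 4 → ZMod (ℓ ^ m)) + d • w := by
          have := congrArg Subtype.val hcd
          simpa using this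
        rw [hcdM, hb1M]
        exact Submodule.mem_span_pair.mpr
          ⟨c * ↑u⁻¹, d - c * ↑u⁻¹ * β, by module⟩
      · rw [Submodule.span_le]
        rintro z hz
        simp only [Set.mem_insert_iff, Set.mem_singleton_iff] at hz
        rcases hz with rfl | rfl
        · exact he
        · exact hw
    have hunit : IsUnit (w 2) ∨ IsUnit (w 3) := by
      by_contra hcon
      push_neg at hcon
      obtain ⟨c', hc'⟩ := (nonunit_iff hℓ hm _).mp hcon.1
      obtain ⟨d', hd'⟩ := (nonunit_iff hℓ hm _).mp hcon.2
      set N : ZMod (ℓ ^ m) := ((ℓ ^ (m - 1) : ℕ) : ZMod (ℓ ^ m)) with hN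
      have hzM : (N * w 0) • e0 - N • w = 0 := by
        funext i
        fin_cases i
        · simp [e0]
        · simp [e0, hw1]
        · simp only [Pi.sub_apply, Pi.smul_apply, smul_eq_mul]
          simp [e0, hc', kill hℓ hm]
          exact kill hℓ hm c'
        · simp only [Pi.sub_apply, Pi.smul_apply, smul_eq_mul]
          simp [e0, hd', kill hℓ hm]
          exact kill hℓ hm d'
      have hzK : (N * w 0) • (⟨e0, he⟩ : K) - N • b2 = 0 := by
        apply Subtype.ext
        simpa using hzM
      have hcomb : ((N * w 0) * α) • b1 + ((N * w 0) * β - N) • b2 = 0 := by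
        have heq : ((N * w 0) * α) • b1 + ((N * w 0) * β - N) • b2
            = (N * w 0) • (α • b1 + β • b2) - N • b2 := by module
        rw [heq, ← hαβ]
        exact hzK
      obtain ⟨h1, h2⟩ := hind _ _ hcomb
      have hNw : N * w 0 = 0 := by
        have : N * w 0 = (N * w 0 * α) * ↑u⁻¹ := by
          rw [← hu, mul_assoc, u.mul_inv, mul_one]
        rw [this, h1, zero_mul]
      rw [hNw, zero_mul, zero_sub, neg_eq_zero] at h2
      exact pow_pred_ne_zero hℓ hm h2
    refine ⟨w 2, w 3, hunit, ?_⟩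
    have hwv : wv (w 2) (w 3) = w - (w 0) • e0 := by
      funext i; fin_cases i <;> simp [wv, e0, hw1]
    rw [hspan, Kcd, hwv, span_pair_sub_smul]
  have hαβunit : IsUnit α ∨ IsUnit β := by
    by_contra hcon
    push_neg at hcon
    obtain ⟨a', ha'⟩ := (nonunit_iff hℓ hm α).mp hcon.1
    obtain ⟨b', hb'⟩ := (nonunit_iff hℓ hm β).mp hcon.2
    have hz : (((ℓ ^ (m - 1) : ℕ) : ZMod (ℓ ^ m)) • (⟨e0, he⟩ : K) : K) = 0 := by
      rw [hαβ, smul_add, smul_smul, smul_smul, ha', hb', kill hℓ hm, kill hℓ hm,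
        zero_smul, zero_smul, add_zero]
    have hzM := congrArg Subtype.val hz
    have h0 : ((ℓ ^ (m - 1) : ℕ) : ZMod (ℓ ^ m)) * 1 = 0 := by
      simpa [e0] using congrFun hzM 0
    rw [mul_one] at h0
    exact pow_pred_ne_zero hℓ hm h0
  rcases hαβunit with hα | hβ
  · exact main b1 b2 (fun k => ⟨_, _, hrepr k⟩) hindep α β hαβ hα
  · refine main b2 b1 (fun k => ⟨φ k 1, φ k 0, by rw [add_comm]; exact hrepr k⟩)
      (fun c d hcd => by
        obtain ⟨h1, h2⟩ := hindep d c (by rwa [add_comm] at hcd)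
        exact ⟨h2, h1⟩)
      β α (by rwa [add_comm] at hαβ) hβ

lemma card_good_e0 (hℓ : ℓ.Prime) (hm : 1 ≤ m) :
    Nat.card {K : Submodule (ZMod (ℓ ^ m)) (Fin 4 → ZMod (ℓ ^ m)) // Good e0 K}
      = ℓ ^ m + ℓ ^ (m - 1) := by
  haveI := nezero hℓ hm
  let f : ZMod (ℓ ^ m) ⊕ {s : ZMod (ℓ ^ m) // ¬ IsUnit s} →
      {K : Submodule (ZMod (ℓ ^ m)) (Fin 4 → ZMod (ℓ ^ m)) // Good e0 K} :=
    Sum.elim (fun t => ⟨Kcd t 1, good_Kcd t 1 (Or.inr isUnit_one)⟩)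
      (fun s => ⟨Kcd 1 s.1, good_Kcd 1 s.1 (Or.inl isUnit_one)⟩)
  have hinj : Function.Injective f := by
    rintro (t | s) (t' | s') h
    · have h' : Kcd t 1 = Kcd t' 1 := congrArg Subtype.val h
      obtain ⟨b, hbc, hbd⟩ := Kcd_eq_imp h'
      rw [mul_one] at hbd
      subst hbd
      rw [one_mul] at hbc
      rw [hbc]
    · exfalso
      have h' : Kcd t 1 = Kcd 1 s'.1 := congrArg Subtype.val h
      obtain ⟨b, hbc, hbd⟩ := Kcd_eq_imp h'
      rw [mul_one] at hbd
      exact s'.2 (hbd ▸ IsUnit.of_mul_eq_one (a := b) t hbc)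
    · exfalso
      have h' : Kcd 1 s.1 = Kcd t' 1 := congrArg Subtype.val h
      obtain ⟨b, hbc, hbd⟩ := Kcd_eq_imp h'
      rw [mul_one] at hbc
      exact s.2 (IsUnit.of_mul_eq_one (a := s.1) b (by rw [mul_comm]; exact hbd))
    · have h' : Kcd 1 s.1 = Kcd 1 s'.1 := congrArg Subtype.val h
      obtain ⟨b, hbc, hbd⟩ := Kcd_eq_imp h'
      rw [mul_one] at hbc
      subst hbc
      rw [one_mul] at hbd
      exact congrArg Sum.inr (Subtype.ext hbd)
  have hsurj : Function.Surjective f := by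
    rintro ⟨K, hK⟩
    obtain ⟨c, d, hu, rfl⟩ := good_structure hℓ hm K hK
    by_cases hd : IsUnit d
    · obtain ⟨ud, hud⟩ := hd
      have hwv : wv ((↑ud⁻¹ : ZMod (ℓ ^ m)) * c) 1 = (↑(ud⁻¹) : ZMod (ℓ ^ m)) • wv c d := by
        funext i
        fin_cases i <;> simp [wv]
        rw [← hud, ud.inv_mul]
      exact ⟨.inl (↑ud⁻¹ * c), Subtype.ext (Kcd_unit_smul ud⁻¹ hwv)⟩
    · have hc := hu.resolve_right hd
      obtain ⟨uc, huc⟩ := hc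
      have hs : ¬ IsUnit ((↑uc⁻¹ : ZMod (ℓ ^ m)) * d) := by
        intro hsu
        apply hd
        have hdd : d = (↑uc : ZMod (ℓ ^ m)) * ((↑uc⁻¹ : ZMod (ℓ ^ m)) * d) := by
          rw [← mul_assoc, uc.mul_inv, one_mul]
        rw [hdd]
        exact uc.isUnit.mul hsu
      have hwv : wv 1 ((↑uc⁻¹ : ZMod (ℓ ^ m)) * d) = (↑(uc⁻¹) : ZMod (ℓ ^ m)) • wv c d := by
        funext i
        fin_cases i <;> simp [wv]
        rw [← huc, uc.inv_mul]
      exact ⟨.inr ⟨(↑uc⁻¹ : ZMod (ℓ ^ m)) * d, hs⟩, Subtype.ext (Kcd_unit_smul uc⁻¹ hwv)⟩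
  rw [← Nat.card_eq_of_bijective f ⟨hinj, hsurj⟩, Nat.card_sum, Nat.card_zmod,
    card_nonunits hℓ hm]

end Part6

section Main
variable {n : ℕ}

lemma good_map (g : (Fin 4 → ZMod n) ≃ₗ[ZMod n] (Fin 4 → ZMod n))
    (hg : ∀ a b, ω (g a) (g b) = ω a b) (y : Fin 4 → ZMod n)
    (K : Submodule (ZMod n) (Fin 4 → ZMod n)) (h : Good y K) :
    Good (g y) (K.map (g : (Fin 4 → ZMod n) →ₗ[ZMod n] (Fin 4 → ZMod n))) := by
  obtain ⟨hiso, ⟨φ⟩, hy⟩ := h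
  refine ⟨?_, ⟨((g.submoduleMap K).symm.trans φ)⟩, Submodule.mem_map_of_mem hy⟩
  rintro a ha b hb
  obtain ⟨a', ha', rfl⟩ := Submodule.mem_map.mp ha
  obtain ⟨b', hb', rfl⟩ := Submodule.mem_map.mp hb
  show ω (g a') (g b') = 0
  rw [hg]
  exact hiso a' ha' b' hb'

lemma map_map_symm (g : (Fin 4 → ZMod n) ≃ₗ[ZMod n] (Fin 4 → ZMod n))
    (K : Submodule (ZMod n) (Fin 4 → ZMod n)) :
    (K.map (g.symm : (Fin 4 → ZMod n) →ₗ[ZMod n] (Fin 4 → ZMod n))).map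
      (g : (Fin 4 → ZMod n) →ₗ[ZMod n] (Fin 4 → ZMod n)) = K := by
  ext z
  simp only [Submodule.mem_map]
  constructor
  · rintro ⟨y, ⟨x, hx, rfl⟩, rfl⟩
    simpa using hx
  · intro hz
    exact ⟨g.symm z, ⟨z, hz, rfl⟩, by simp⟩

end Main

end Stmt4

theorem stmt_4 (ℓ m : ℕ) (hℓ : ℓ.Prime) (hm : 1 ≤ m)
    (x : Fin 4 → ZMod (ℓ ^ m)) (hx : addOrderOf x = ℓ ^ m)
    (H : AddSubgroup (Fin 4 → ZMod (ℓ ^ m))) (hH : H = AddSubgroup.zmultiples x) :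
    Nat.card {K : Submodule (ZMod (ℓ ^ m)) (Fin 4 → ZMod (ℓ ^ m)) //
        (∀ a ∈ K, ∀ b ∈ K,
          a 0 * b 1 - a 1 * b 0 + a 2 * b 3 - a 3 * b 2 = (0 : ZMod (ℓ ^ m))) ∧
        Nonempty (K ≃ₗ[ZMod (ℓ ^ m)] (Fin 2 → ZMod (ℓ ^ m))) ∧
        (H : Set (Fin 4 → ZMod (ℓ ^ m))) ⊆ (K : Set (Fin 4 → ZMod (ℓ ^ m)))} =
      ℓ ^ m + ℓ ^ (m - 1) := by
  classical
  subst hH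
  haveI := Stmt4.nezero hℓ hm
  -- x has a unit coordinate
  have hxu : ∃ i, IsUnit (x i) := by
    by_contra hcon
    push_neg at hcon
    choose b hb using fun i => (Stmt4.nonunit_iff hℓ hm (x i)).mp (hcon i)
    have hsm : (ℓ ^ (m - 1)) • x = 0 := by
      funext i
      rw [Pi.smul_apply, nsmul_eq_mul, hb i, Pi.zero_apply]
      exact Stmt4.kill hℓ hm (b i)
    have hdvd : addOrderOf x ∣ ℓ ^ (m - 1) := addOrderOf_dvd_of_nsmul_eq_zero hsm
    rw [hx] at hdvd
    have := (Nat.pow_dvd_pow_iff_le_right hℓ.one_lt).mp hdvd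
    omega
  obtain ⟨g, hgω, hge⟩ := Stmt4.exists_g x hxu
  -- convert predicate to Good x
  have E1 : {K : Submodule (ZMod (ℓ ^ m)) (Fin 4 → ZMod (ℓ ^ m)) //
        (∀ a ∈ K, ∀ b ∈ K,
          a 0 * b 1 - a 1 * b 0 + a 2 * b 3 - a 3 * b 2 = (0 : ZMod (ℓ ^ m))) ∧
        Nonempty (K ≃ₗ[ZMod (ℓ ^ m)] (Fin 2 → ZMod (ℓ ^ m))) ∧
        ((AddSubgroup.zmultiples x : AddSubgroup (Fin 4 → ZMod (ℓ ^ m))) :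
            Set (Fin 4 → ZMod (ℓ ^ m))) ⊆ (K : Set (Fin 4 → ZMod (ℓ ^ m)))}
      ≃ {K : Submodule (ZMod (ℓ ^ m)) (Fin 4 → ZMod (ℓ ^ m)) // Stmt4.Good x K} := by
    apply Equiv.subtypeEquivRight
    intro K
    unfold Stmt4.Good Stmt4.ω
    refine and_congr Iff.rfl (and_congr Iff.rfl ?_)
    constructor
    · intro hsub
      exact hsub (AddSubgroup.mem_zmultiples x)
    · intro hxK a ha
      obtain ⟨k, rfl⟩ := AddSubgroup.mem_zmultiples_iff.mp ha
      exact K.toAddSubgroup.zsmul_mem hxK k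
  have E2 : {K : Submodule (ZMod (ℓ ^ m)) (Fin 4 → ZMod (ℓ ^ m)) // Stmt4.Good x K}
      ≃ {K : Submodule (ZMod (ℓ ^ m)) (Fin 4 → ZMod (ℓ ^ m)) // Stmt4.Good Stmt4.e0 K} := by
    have hgs : ∀ a b, Stmt4.ω (g.symm a) (g.symm b) = Stmt4.ω a b := Stmt4.symm_ω g hgω
    refine ⟨fun K => ⟨K.1.map (g.symm : _ →ₗ[ZMod (ℓ ^ m)] _), ?_⟩,
      fun K => ⟨K.1.map (g : _ →ₗ[ZMod (ℓ ^ m)] _), ?_⟩, ?_, ?_⟩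
    · have h := Stmt4.good_map g.symm hgs x K.1 K.2
      rwa [show g.symm x = Stmt4.e0 by rw [← hge, g.symm_apply_apply]] at h
    · have h := Stmt4.good_map g hgω Stmt4.e0 K.1 K.2
      rwa [hge] at h
    · rintro ⟨K, hK⟩
      exact Subtype.ext (Stmt4.map_map_symm g K)
    · rintro ⟨K, hK⟩
      exact Subtype.ext (Stmt4.map_map_symm g.symm K)
  rw [Nat.card_congr (E1.trans E2), Stmt4.card_good_e0 hℓ hm]
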